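/- arXiv:1711.03439 — 5 statements merged into one kernel-verified Lean document; each statement's English description precedes it below -/
import Mathlib

section
/- For all u, û ∈ ℝ^m and β > 0, it holds that h(û) ≥ h_β(u) + ⟨y*_β(u), û − u⟩ + (β/2)‖y*_β(u) − ẏ‖². -/
open scoped RealInnerProductSpace

/-- Lemma 1(c): `h(û) ≥ h_β(u) + ⟨y*_β(u), û - u⟩ + (β/2)‖y*_β(u) - ẏ‖²`.
The proper closed convex `h*` is encoded by its nonempty effective domain `S`, a convex
real function `hstar` on `S`, and a closed epigraph; `h` is the Fenchel conjugate of `h*`,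
i.e. `h(û) = sup_{y ∈ S} (⟨û, y⟩ - h*(y))`, taken in the extended reals since it may be
`+∞`; `yb u = y*_β(u)` is the unique maximizer defining `h_β(u)`. -/
theorem conjugate_lower_bound_of_smoothed (m : ℕ) (S : Set (EuclideanSpace ℝ (Fin m)))
    (hstar : EuclideanSpace ℝ (Fin m) → ℝ)
    (hS : S.Nonempty) (hconv : ConvexOn ℝ S hstar)
    (hclosed : IsClosed {q : EuclideanSpace ℝ (Fin m) × ℝ | q.1 ∈ S ∧ hstar q.1 ≤ q.2})
    (ydot : EuclideanSpace ℝ (Fin m)) (β : ℝ) (hβ : 0 < β)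
    (yb : EuclideanSpace ℝ (Fin m) → EuclideanSpace ℝ (Fin m))
    (hyb : ∀ u, yb u ∈ S ∧
      (∀ z ∈ S, ⟪u, z⟫ - hstar z - β / 2 * ‖z - ydot‖ ^ 2
          ≤ ⟪u, yb u⟫ - hstar (yb u) - β / 2 * ‖yb u - ydot‖ ^ 2) ∧
      (∀ z ∈ S, ⟪u, z⟫ - hstar z - β / 2 * ‖z - ydot‖ ^ 2
          = ⟪u, yb u⟫ - hstar (yb u) - β / 2 * ‖yb u - ydot‖ ^ 2 → z = yb u)) :
    ∀ u v : EuclideanSpace ℝ (Fin m),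
      (((⟪u, yb u⟫ - hstar (yb u) - β / 2 * ‖yb u - ydot‖ ^ 2)
          + ⟪yb u, v - u⟫ + β / 2 * ‖yb u - ydot‖ ^ 2 : ℝ) : EReal)
        ≤ ⨆ y : S, ((⟪v, (y : EuclideanSpace ℝ (Fin m))⟫ - hstar y : ℝ) : EReal) := by
  intro u v
  have key : (⟪u, yb u⟫ - hstar (yb u) - β / 2 * ‖yb u - ydot‖ ^ 2)
      + ⟪yb u, v - u⟫ + β / 2 * ‖yb u - ydot‖ ^ 2
      = ⟪v, yb u⟫ - hstar (yb u) := by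
    rw [inner_sub_right, real_inner_comm (yb u) v, real_inner_comm (yb u) u]
    ring
  rw [key]
  exact le_iSup (fun y : S => ((⟪v, (y : EuclideanSpace ℝ (Fin m))⟫ - hstar y : ℝ) : EReal))
    ⟨yb u, (hyb u).1⟩
end

section
/- For all u ∈ ℝ^m and all β, β̄ > 0, it holds that h_β(u) ≤ h_β̄(u) + ((β̄ − β)/2)‖y*_β(u) − ẏ‖². -/
open scoped RealInnerProductSpace

/-- Lemma 1(d): for all `u` and all `β, β̄ > 0`,
`h_β(u) ≤ h_β̄(u) + ((β̄ - β)/2)‖y*_β(u) - ẏ‖²`. The proper closed convex `h*` is encoded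
by its nonempty effective domain `S`, a convex real function `hstar` on `S`, and a closed
epigraph; `yb β u = y*_β(u)` is the unique maximizer defining `h_β(u)`, so `h_β(u)` is the
objective value at `yb β u`. -/
theorem smoothed_function_beta_comparison (m : ℕ) (S : Set (EuclideanSpace ℝ (Fin m)))
    (hstar : EuclideanSpace ℝ (Fin m) → ℝ)
    (hS : S.Nonempty) (hconv : ConvexOn ℝ S hstar)
    (hclosed : IsClosed {q : EuclideanSpace ℝ (Fin m) × ℝ | q.1 ∈ S ∧ hstar q.1 ≤ q.2})
    (ydot : EuclideanSpace ℝ (Fin m))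
    (yb : ℝ → EuclideanSpace ℝ (Fin m) → EuclideanSpace ℝ (Fin m))
    (hyb : ∀ β : ℝ, 0 < β → ∀ u, yb β u ∈ S ∧
      (∀ z ∈ S, ⟪u, z⟫ - hstar z - β / 2 * ‖z - ydot‖ ^ 2
          ≤ ⟪u, yb β u⟫ - hstar (yb β u) - β / 2 * ‖yb β u - ydot‖ ^ 2) ∧
      (∀ z ∈ S, ⟪u, z⟫ - hstar z - β / 2 * ‖z - ydot‖ ^ 2
          = ⟪u, yb β u⟫ - hstar (yb β u) - β / 2 * ‖yb β u - ydot‖ ^ 2 → z = yb β u)) :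
    ∀ u : EuclideanSpace ℝ (Fin m), ∀ β β' : ℝ, 0 < β → 0 < β' →
      ⟪u, yb β u⟫ - hstar (yb β u) - β / 2 * ‖yb β u - ydot‖ ^ 2
        ≤ (⟪u, yb β' u⟫ - hstar (yb β' u) - β' / 2 * ‖yb β' u - ydot‖ ^ 2)
          + (β' - β) / 2 * ‖yb β u - ydot‖ ^ 2 := by
  intro u β β' hβ hβ'
  have h := ((hyb β' hβ' u).2.1) (yb β u) ((hyb β hβ u).1)
  nlinarith [h]
end

section
/- Let τ_0 ∈ (0, 1] and for every k ≥ 1 let τ_k be the unique positive root of τ³ + τ² + τ_{k−1}² τ − τ_{k−1}² = 0. Then for all k ≥ 0, 1/(k + τ_0⁻¹) ≤ τ_k ≤ 2/(k + τ_0⁻¹ + 1). -/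
lemma tau_step_lower (c t : ℝ) (hc : 0 < c) (ht : 0 < t)
    (heq : t^3+t^2+c^2*t-c^2 = 0) : c ≤ t*(1+c) := by
  nlinarith [sq_nonneg (t*(1+c)-c), sq_nonneg t, sq_nonneg c, mul_pos hc ht,
    sq_nonneg (t-c), sq_nonneg (t+c), mul_pos (mul_pos hc hc) ht]

lemma tau_step_upper (c t : ℝ) (hc : 0 < c) (ht : 0 < t)
    (heq : t^3+t^2+c^2*t-c^2 = 0) : t*(2+c) ≤ 2*c := by
  nlinarith [sq_nonneg (t*(2+c)-2*c), sq_nonneg t, sq_nonneg c, mul_pos hc ht,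
    sq_nonneg (t-c), mul_pos (mul_pos hc hc) ht]

/-- Bounds on the step-size sequence `τ_k` of SMART-CD, where `τ_0 ∈ (0,1]`
and, for `k ≥ 1`, `τ_k` is the (unique) positive root of
`τ³ + τ² + τ_{k-1}² τ - τ_{k-1}² = 0`. -/
theorem smartcd_tau_bounds (τ : ℕ → ℝ) (hτ0 : τ 0 ∈ Set.Ioc (0 : ℝ) 1)
    (hrec : ∀ k : ℕ, 0 < τ (k + 1) ∧
      (τ (k + 1)) ^ 3 + (τ (k + 1)) ^ 2 + (τ k) ^ 2 * τ (k + 1) - (τ k) ^ 2 = 0) :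
    ∀ k : ℕ, 1 / ((k : ℝ) + (τ 0)⁻¹) ≤ τ k ∧ τ k ≤ 2 / ((k : ℝ) + (τ 0)⁻¹ + 1) := by
  obtain ⟨h0pos, h0le⟩ := hτ0
  set a : ℝ := (τ 0)⁻¹ with ha_def
  have ha1 : (1:ℝ) ≤ a := by
    rw [ha_def]
    rw [le_inv_comm₀ one_pos h0pos]; simpa using h0le
  have hmul : τ 0 * a = 1 := mul_inv_cancel₀ (ne_of_gt h0pos)
  intro k
  induction k with
  | zero =>
    constructor
    · simp only [Nat.cast_zero, zero_add]
      rw [div_le_iff₀ (by linarith)]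
      linarith [hmul]
    · simp only [Nat.cast_zero, zero_add]
      rw [le_div_iff₀ (by linarith)]
      nlinarith [hmul]
  | succ k ih =>
    obtain ⟨ihl, ihr⟩ := ih
    obtain ⟨ht, heq⟩ := hrec k
    have hka : (0:ℝ) < (k:ℝ) + a := by positivity
    have hc : 0 < τ k := lt_of_lt_of_le (by positivity) ihl
    have h1 : 1 ≤ τ k * ((k:ℝ) + a) := by
      have := (div_le_iff₀ hka).mp ihl; linarith
    have h2 : τ k * ((k:ℝ) + a + 1) ≤ 2 := by
      have := (le_div_iff₀ (by positivity)).mp ihr; linarith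
    have hlow := tau_step_lower (τ k) (τ (k+1)) hc ht heq
    have hup := tau_step_upper (τ k) (τ (k+1)) hc ht heq
    constructor
    · rw [div_le_iff₀ (by push_cast; positivity)]
      push_cast
      nlinarith [mul_nonneg (sub_nonneg.mpr hlow) (le_of_lt (by positivity : (0:ℝ) < (k:ℝ)+1+a))]
    · rw [le_div_iff₀ (by push_cast; positivity)]
      push_cast
      nlinarith [mul_nonneg (sub_nonneg.mpr hup) (le_of_lt (by positivity : (0:ℝ) < (k:ℝ)+1+a+1))]
end

section
/- Let τ_0 ∈ (0, 1], let τ_k for k ≥ 1 be the unique positive root of τ³ + τ² + τ_{k−1}² τ − τ_{k−1}² = 0, let β_1 > 0, and define β_{k+1} := β_k/(1 + τ_k) for k ≥ 1. Then for all k ≥ 1, β_k ≤ β_1(1 + τ_0)/(τ_0 k + 1). -/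
/-- Bound on the smoothness parameter sequence `β_k` of SMART-CD: with
`τ_0 ∈ (0,1]`, `τ_k` the (unique) positive root of `τ³ + τ² + τ_{k-1}² τ - τ_{k-1}² = 0`
for `k ≥ 1`, `β_1 > 0` and `β_{k+1} = β_k / (1 + τ_k)` for `k ≥ 1`, one has
`β_k ≤ β_1 (1 + τ_0) / (τ_0 k + 1)` for all `k ≥ 1`. -/
theorem smartcd_beta_bound (τ β : ℕ → ℝ) (hτ0 : τ 0 ∈ Set.Ioc (0 : ℝ) 1)
    (hrec : ∀ k : ℕ, 0 < τ (k + 1) ∧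
      (τ (k + 1)) ^ 3 + (τ (k + 1)) ^ 2 + (τ k) ^ 2 * τ (k + 1) - (τ k) ^ 2 = 0)
    (hβ1 : 0 < β 1)
    (hβrec : ∀ k : ℕ, 1 ≤ k → β (k + 1) = β k / (1 + τ k)) :
    ∀ k : ℕ, 1 ≤ k → β k ≤ β 1 * (1 + τ 0) / (τ 0 * (k : ℝ) + 1) := by
  obtain ⟨hτ0pos, hτ0le⟩ := hτ0
  -- positivity of τ
  have hpos : ∀ k : ℕ, 0 < τ k := by
    intro k
    cases k with
    | zero => exact hτ0pos
    | succ n => exact (hrec n).1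
  -- key step: τ (k+1) * (1 + τ k) ≥ τ k
  have hstep : ∀ k : ℕ, τ k ≤ τ (k + 1) * (1 + τ k) := by
    intro k
    obtain ⟨ha, hcube⟩ := hrec k
    have hx := hpos k
    nlinarith [sq_nonneg (τ (k+1) * (1 + τ k) - τ k), sq_nonneg (τ (k+1)),
      sq_nonneg (τ k), mul_pos ha hx, sq_nonneg (τ (k+1) + τ k),
      mul_pos (mul_pos ha ha) hx, mul_pos ha (mul_pos hx hx)]
  -- lower bound: τ0 ≤ τ k * (τ0 * k + 1)
  have hlow : ∀ k : ℕ, τ 0 ≤ τ k * (τ 0 * (k : ℝ) + 1) := by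
    intro k
    induction k with
    | zero => simp
    | succ n ih =>
      have h1 := hstep n
      have hx := hpos n
      have ha := hpos (n + 1)
      have hk : (0 : ℝ) ≤ (n : ℝ) := Nat.cast_nonneg n
      push_cast
      nlinarith [mul_pos hτ0pos hx, mul_nonneg (mul_nonneg hτ0pos.le hx.le) hk,
        mul_nonneg (mul_nonneg ha.le hτ0pos.le) hk]
  -- positivity of β
  have hβpos : ∀ m : ℕ, 1 ≤ m → 0 < β m := by
    intro m hm
    induction m with
    | zero => omega
    | succ p ihp =>
      rcases Nat.eq_or_lt_of_le hm with h2 | h2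
      · have : p = 0 := by omega
        subst this; exact hβ1
      · have hp : 1 ≤ p := by omega
        rw [hβrec p hp]
        exact div_pos (ihp hp) (by linarith [hpos p])
  -- main induction
  intro k hk
  induction k with
  | zero => omega
  | succ n ih =>
    rcases Nat.eq_or_lt_of_le hk with h1 | h1
    · have : n = 0 := by omega
      subst this
      push_cast
      rw [mul_one, le_div_iff₀ (by linarith)]
      nlinarith
    · have hn : 1 ≤ n := by omega
      have ihn := ih hn
      have hx := hpos n
      have hlown := hlow n
      have hβn : 0 < β n := hβpos n hn
      rw [hβrec n hn]
      have hden : (0 : ℝ) < τ 0 * (n : ℝ) + 1 := by positivity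
      have hden2 : (0 : ℝ) < τ 0 * ((n : ℝ) + 1) + 1 := by positivity
      have h1x : (0 : ℝ) < 1 + τ n := by linarith
      push_cast
      rw [div_le_div_iff₀ h1x hden2]
      have key : β n * (τ 0 * (n : ℝ) + 1) ≤ β 1 * (1 + τ 0) := by
        rw [le_div_iff₀ hden] at ihn
        linarith
      nlinarith [mul_le_mul_of_nonneg_left hlown hβn.le, mul_pos hβn hx]
end

section
/- Let τ_0 ∈ (0, 1] and let {τ_i}_{i≥1} be real numbers with 1/(i + τ_0⁻¹) ≤ τ_i ≤ 1 for all i ≥ 1. Then for every k ≥ 1, ∏_{i=1}^{k} (1 − τ_i) ≤ 1/(τ_0 k + 1). -/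
/-- The contraction factor of SMART-CD: if `τ_0 ∈ (0,1]` and the reals
`τ_i` satisfy `1/(i + τ_0⁻¹) ≤ τ_i ≤ 1` for all `i ≥ 1`, then for every `k ≥ 1`,
`∏_{i=1}^k (1 - τ i) ≤ 1/(τ_0 k + 1)`. -/
theorem smartcd_contraction_factor (τ0 : ℝ) (hτ0 : τ0 ∈ Set.Ioc (0 : ℝ) 1) (τ : ℕ → ℝ)
    (hτ : ∀ i : ℕ, 1 ≤ i → 1 / ((i : ℝ) + τ0⁻¹) ≤ τ i ∧ τ i ≤ 1) :
    ∀ k : ℕ, 1 ≤ k →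
      ∏ i ∈ Finset.Icc 1 k, (1 - τ i) ≤ 1 / (τ0 * (k : ℝ) + 1) := by
  obtain ⟨hτ0p, hτ0le⟩ := hτ0
  have main : ∀ k : ℕ, ∏ i ∈ Finset.Icc 1 k, (1 - τ i) ≤ 1 / (τ0 * (k : ℝ) + 1) := by
    intro k
    induction k with
    | zero => simp
    | succ n ih =>
      have hden : (0:ℝ) < τ0 * n + 1 := by positivity
      have hden2 : (0:ℝ) < τ0 * (n+1 : ℕ) + 1 := by push_cast; positivity
      rw [Finset.prod_Icc_succ_top (by omega)]
      have hτn := hτ (n+1) (by omega)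
      have hfac : 1 - τ (n+1) ≤ (τ0 * n + 1) / (τ0 * (n+1 : ℕ) + 1) := by
        have h1 : 1 / ((n+1 : ℕ) + τ0⁻¹) ≤ τ (n+1) := hτn.1
        have hτ0ne : τ0 ≠ 0 := ne_of_gt hτ0p
        have heq : (1:ℝ) - 1 / ((n+1 : ℕ) + τ0⁻¹) = (τ0 * n + 1) / (τ0 * (n+1 : ℕ) + 1) := by
          push_cast
          field_simp
          ring
        linarith [heq ▸ (by linarith : (1:ℝ) - τ (n+1) ≤ 1 - 1 / ((n+1 : ℕ) + τ0⁻¹))]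
      have hfac0 : 0 ≤ 1 - τ (n+1) := by linarith [hτn.2]
      have hprod0 : 0 ≤ ∏ i ∈ Finset.Icc 1 n, (1 - τ i) := by
        apply Finset.prod_nonneg
        intro i hi
        have := (hτ i (Finset.mem_Icc.mp hi).1).2
        linarith
      calc (∏ i ∈ Finset.Icc 1 n, (1 - τ i)) * (1 - τ (n+1))
          ≤ (1 / (τ0 * n + 1)) * ((τ0 * n + 1) / (τ0 * (n+1 : ℕ) + 1)) :=
            mul_le_mul ih hfac hfac0 (by positivity)
        _ = 1 / (τ0 * (n+1 : ℕ) + 1) := by field_simp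
  intro k _
  exact main k
end
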